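/- Under unconfoundedness and overlap, E[(D - (1-D)·π(X)/(1-π(X)))·Y] = P(D=1)·(E[Y(1)|D=1] - E[Y(0)|D=1]); i.e., the weighted contrast identifies the average treatment effect on the treated up to the factor P(D=1). -/

import Mathlib

open MeasureTheory ProbabilityTheory Set

lemma indepFun_of_rat {α : Type*} [MeasurableSpace α] (ν : Measure α) [IsProbabilityMeasure ν]
    (f g : α → ℝ) (hf : Measurable f) (hg : Measurable g)
    (h : ∀ q r : ℚ, ν (f ⁻¹' Iic (q:ℝ) ∩ g ⁻¹' Iic (r:ℝ))
      = ν (f ⁻¹' Iic (q:ℝ)) * ν (g ⁻¹' Iic (r:ℝ))) :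
    IndepFun f g ν := by
  have hgen : ∀ (u : α → ℝ), Measurable u → MeasurableSpace.comap u inferInstance
      = MeasurableSpace.generateFrom (Set.range fun q : ℚ => u ⁻¹' Iic (q:ℝ)) := by
    intro u hu
    have : (inferInstance : MeasurableSpace ℝ) = borel ℝ := BorelSpace.measurable_eq
    rw [this, Real.borel_eq_generateFrom_Iic_rat, MeasurableSpace.comap_generateFrom]
    congr 1
    ext s
    simp only [Set.mem_image, Set.mem_iUnion, Set.mem_singleton_iff, Set.mem_range]
    constructor
    · rintro ⟨x, ⟨y, rfl⟩, rfl⟩; exact ⟨y, rfl⟩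
    · rintro ⟨y, rfl⟩; exact ⟨Iic (y:ℝ), ⟨y, rfl⟩, rfl⟩
  have hpi : ∀ (u : α → ℝ), IsPiSystem (Set.range fun q : ℚ => u ⁻¹' Iic (q:ℝ)) := by
    rintro u _ ⟨q, rfl⟩ _ ⟨r, rfl⟩ -
    refine ⟨min q r, ?_⟩
    simp only []
    rw [← Set.preimage_inter, Iic_inter_Iic]
    norm_cast
  exact IndepSets.indep (hf.comap_le) (hg.comap_le) (hpi f) (hpi g) (hgen f hf) (hgen g hg)
    (by rintro _ _ ⟨q, rfl⟩ ⟨r, rfl⟩; exact Filter.Eventually.of_forall fun a => by simpa using h q r)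

lemma condIndepFun_ae_indepFun {Ω : Type*} {m : MeasurableSpace Ω} [mΩ : MeasurableSpace Ω]
    [StandardBorelSpace Ω] (hm : m ≤ mΩ) (μ : Measure Ω) [IsFiniteMeasure μ]
    (f g : Ω → ℝ) (hf : Measurable f) (hg : Measurable g)
    (h : CondIndepFun m hm f g μ) :
    ∀ᵐ ω ∂μ, IndepFun f g (condExpKernel μ m ω) := by
  rw [condIndepFun_iff_condExp_inter_preimage_eq_mul hf hg] at h
  have key : ∀ (s t : Set ℝ), MeasurableSet s → MeasurableSet t →
      ∀ᵐ ω ∂μ, condExpKernel μ m ω (f ⁻¹' s ∩ g ⁻¹' t)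
        = condExpKernel μ m ω (f ⁻¹' s) * condExpKernel μ m ω (g ⁻¹' t) := by
    intro s t hs ht
    have h1 := condExpKernel_ae_eq_condExp (μ := μ) hm ((hf hs).inter (hg ht))
    have h2 := condExpKernel_ae_eq_condExp (μ := μ) hm (hf hs)
    have h3 := condExpKernel_ae_eq_condExp (μ := μ) hm (hg ht)
    filter_upwards [h s t hs ht, h1, h2, h3] with ω hω h1' h2' h3'
    have hr : (condExpKernel μ m ω (f ⁻¹' s ∩ g ⁻¹' t)).toReal
        = (condExpKernel μ m ω (f ⁻¹' s)).toReal * (condExpKernel μ m ω (g ⁻¹' t)).toReal := by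
      rw [← measureReal_def, ← measureReal_def, ← measureReal_def, h1', h2', h3']; exact hω
    rw [← ENNReal.toReal_mul] at hr
    exact (ENNReal.toReal_eq_toReal_iff' (measure_ne_top _ _)
      (ENNReal.mul_ne_top (measure_ne_top _ _) (measure_ne_top _ _))).mp hr
  have hae : ∀ᵐ ω ∂μ, ∀ q r : ℚ, condExpKernel μ m ω (f ⁻¹' Iic (q:ℝ) ∩ g ⁻¹' Iic (r:ℝ))
      = condExpKernel μ m ω (f ⁻¹' Iic (q:ℝ)) * condExpKernel μ m ω (g ⁻¹' Iic (r:ℝ)) := by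
    rw [ae_all_iff]
    intro q
    rw [ae_all_iff]
    intro r
    exact key _ _ measurableSet_Iic measurableSet_Iic
  filter_upwards [hae] with ω hω
  exact indepFun_of_rat _ f g hf hg hω


theorem ipw_key {Ω : Type*} {m : MeasurableSpace Ω} [mΩ : MeasurableSpace Ω]
    [StandardBorelSpace Ω] (hm : m ≤ mΩ)
    (μ : Measure Ω) [IsProbabilityMeasure μ]
    (D : Ω → ℝ) (Y0 Y1 : Ω → ℝ)
    (hD : Measurable D) (hY0 : Measurable Y0) (hY1 : Measurable Y1)
    (hDbin : ∀ ω, D ω = 0 ∨ D ω = 1)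
    (hpos : 0 < μ {ω | D ω = 1})
    (hY0int : Integrable Y0 μ) (hY1int : Integrable Y1 μ)
    (π : Ω → ℝ) (hπ : π =ᵐ[μ] μ[D | m])
    (hoverlap : ∀ᵐ ω ∂μ, 0 < π ω ∧ π ω < 1)
    (hCI : CondIndepFun m hm Y0 D μ)
    (hint : Integrable
      (fun ω => (D ω - (1 - D ω) * π ω / (1 - π ω))
        * (D ω * Y1 ω + (1 - D ω) * Y0 ω)) μ) :
    ∫ ω, (D ω - (1 - D ω) * π ω / (1 - π ω))
        * (D ω * Y1 ω + (1 - D ω) * Y0 ω) ∂μ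
      = (μ {ω | D ω = 1}).toReal
        * (∫ ω, Y1 ω ∂μ[|{ω | D ω = 1}] - ∫ ω, Y0 ω ∂μ[|{ω | D ω = 1}]) := by
  have hBmeas : MeasurableSet {ω | D ω = 1} := hD (measurableSet_singleton 1)
  have hDnorm : ∀ ω, ‖D ω‖ ≤ 1 := by
    intro ω; rcases hDbin ω with h | h <;> simp [h]
  have hDint : Integrable D μ :=
    (integrable_const (1:ℝ)).mono' hD.aestronglyMeasurable (ae_of_all _ hDnorm)
  have habs : ∀ (Yi : Ω → ℝ) ω, ‖D ω * Yi ω‖ ≤ (fun ω => |Yi ω|) ω := by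
    intro Yi ω
    rcases hDbin ω with h | h <;> simp [h, abs_nonneg, norm_mul]
  have hDY1int : Integrable (fun ω => D ω * Y1 ω) μ :=
    hY1int.abs.mono' (hD.mul hY1).aestronglyMeasurable (ae_of_all _ (habs Y1))
  have hDY0int : Integrable (fun ω => D ω * Y0 ω) μ :=
    hY0int.abs.mono' (hD.mul hY0).aestronglyMeasurable (ae_of_all _ (habs Y0))
  have h1mDY0int : Integrable (fun ω => (1 - D ω) * Y0 ω) μ := by
    refine hY0int.abs.mono' ((measurable_const.sub hD).mul hY0).aestronglyMeasurable
      (ae_of_all _ fun ω => ?_)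
    rcases hDbin ω with h | h <;> simp [h, abs_nonneg, norm_mul]
  have hpt : ∀ ω, (D ω - (1 - D ω) * π ω / (1 - π ω)) * (D ω * Y1 ω + (1 - D ω) * Y0 ω)
      = D ω * Y1 ω - (1 - D ω) * π ω / (1 - π ω) * Y0 ω := by
    intro ω; rcases hDbin ω with h | h <;> rw [h] <;> ring
  have hWint : Integrable (fun ω => (1 - D ω) * π ω / (1 - π ω) * Y0 ω) μ := by
    refine (((hint.congr (ae_of_all _ hpt)).sub hDY1int).neg).congr (ae_of_all _ fun ω => ?_)
    simp only [Pi.sub_apply, Pi.neg_apply]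
    ring
  have haeI : ∀ᵐ ω ∂μ, IndepFun Y0 D (condExpKernel μ m ω) :=
    condIndepFun_ae_indepFun hm μ Y0 D hY0 hD hCI
  have hk_DY0 := condExp_ae_eq_integral_condExpKernel (μ := μ) hm hDY0int
  have hk_D := condExp_ae_eq_integral_condExpKernel (μ := μ) hm hDint
  have hk_Y0 := condExp_ae_eq_integral_condExpKernel (μ := μ) hm hY0int
  have hprod : μ[fun ω => D ω * Y0 ω|m] =ᵐ[μ] fun ω => (μ[D|m]) ω * (μ[Y0|m]) ω := by
    filter_upwards [hk_DY0, hk_D, hk_Y0, haeI] with ω h1 h2 h3 hI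
    rw [h1, h2, h3]
    exact hI.symm.integral_fun_mul_eq_mul_integral hD.aestronglyMeasurable hY0.aestronglyMeasurable
  have h1mDcond : μ[fun ω => (1 - D ω) * Y0 ω|m]
      =ᵐ[μ] fun ω => (1 - (μ[D|m]) ω) * (μ[Y0|m]) ω := by
    have heq : (fun ω => (1 - D ω) * Y0 ω) =ᵐ[μ] (Y0 - fun ω => D ω * Y0 ω) := by
      refine ae_of_all _ fun ω => ?_
      simp only [Pi.sub_apply]; ring
    refine (condExp_congr_ae heq).trans ?_
    refine (condExp_sub hY0int hDY0int m).trans ?_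
    filter_upwards [hprod] with ω h1
    simp only [Pi.sub_apply]
    rw [h1]; ring
  have hπ01 : ∀ᵐ ω ∂μ, 0 < (μ[D|m]) ω ∧ (μ[D|m]) ω < 1 := by
    filter_upwards [hπ, hoverlap] with ω h1 h2
    rw [← h1]; exact h2
  -- the key IPW identity
  have hA : ∫ ω, (1 - D ω) * π ω / (1 - π ω) * Y0 ω ∂μ = ∫ ω, D ω * Y0 ω ∂μ := by
    have hgSM : StronglyMeasurable[m] (fun ω => (μ[D|m]) ω / (1 - (μ[D|m]) ω)) :=
      (stronglyMeasurable_condExp.measurable.div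
        (measurable_const.sub stronglyMeasurable_condExp.measurable)).stronglyMeasurable
    have hW_eq : (fun ω => (1 - D ω) * π ω / (1 - π ω) * Y0 ω)
        =ᵐ[μ] ((fun ω => (μ[D|m]) ω / (1 - (μ[D|m]) ω)) * fun ω => (1 - D ω) * Y0 ω) := by
      filter_upwards [hπ] with ω h1
      simp only [Pi.mul_apply]
      rw [← h1]; ring
    have hGint : Integrable ((fun ω => (μ[D|m]) ω / (1 - (μ[D|m]) ω))
        * fun ω => (1 - D ω) * Y0 ω) μ := hWint.congr hW_eq
    have hcond : μ[(fun ω => (μ[D|m]) ω / (1 - (μ[D|m]) ω)) * fun ω => (1 - D ω) * Y0 ω|m]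
        =ᵐ[μ] fun ω => (μ[D|m]) ω * (μ[Y0|m]) ω := by
      refine (condExp_mul_of_stronglyMeasurable_left hgSM hGint h1mDY0int).trans ?_
      filter_upwards [h1mDcond, hπ01] with ω h1 h2
      simp only [Pi.mul_apply]
      rw [h1]
      have hne : 1 - (μ[D|m]) ω ≠ 0 := by linarith [h2.2]
      field_simp
    calc ∫ ω, (1 - D ω) * π ω / (1 - π ω) * Y0 ω ∂μ
        = ∫ ω, ((fun ω => (μ[D|m]) ω / (1 - (μ[D|m]) ω)) * fun ω => (1 - D ω) * Y0 ω) ω ∂μ :=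
          integral_congr_ae hW_eq
      _ = ∫ ω, (μ[(fun ω => (μ[D|m]) ω / (1 - (μ[D|m]) ω)) * fun ω => (1 - D ω) * Y0 ω|m]) ω ∂μ :=
          (integral_condExp hm).symm
      _ = ∫ ω, (μ[D|m]) ω * (μ[Y0|m]) ω ∂μ := integral_congr_ae hcond
      _ = ∫ ω, (μ[fun ω => D ω * Y0 ω|m]) ω ∂μ := (integral_congr_ae hprod).symm
      _ = ∫ ω, D ω * Y0 ω ∂μ := integral_condExp hm
  -- indicator identities
  have hind : ∀ (Yi : Ω → ℝ), ∫ ω, D ω * Yi ω ∂μ = ∫ ω in {ω | D ω = 1}, Yi ω ∂μ := by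
    intro Yi
    rw [← integral_indicator hBmeas]
    refine integral_congr_ae (ae_of_all _ fun ω => ?_)
    rcases hDbin ω with h | h
    · have hω : ω ∉ {ω | D ω = 1} := by simp [h]
      simp [h, Set.indicator_of_notMem hω]
    · have hω : ω ∈ {ω | D ω = 1} := h
      simp [h, Set.indicator_of_mem hω]
  have hcondint : ∀ (Yi : Ω → ℝ), ∫ ω, Yi ω ∂μ[|{ω | D ω = 1}]
      = (μ {ω | D ω = 1}).toReal⁻¹ * ∫ ω in {ω | D ω = 1}, Yi ω ∂μ := by
    intro Yi
    rw [ProbabilityTheory.cond, integral_smul_measure, ENNReal.toReal_inv]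
    rfl
  have hμB : (μ {ω | D ω = 1}).toReal ≠ 0 := by
    refine ENNReal.toReal_ne_zero.mpr ⟨?_, measure_ne_top μ _⟩
    exact ne_of_gt hpos
  rw [integral_congr_ae (ae_of_all _ hpt), integral_sub hDY1int hWint, hA, hind Y1, hind Y0,
    hcondint Y1, hcondint Y0]
  field_simp

/-- The weighted contrast identifies the ATT up to the factor `P(D=1)`:
`E[(D - (1-D)·π(X)/(1-π(X)))·Y] = P(D=1)·(E[Y(1)|D=1] - E[Y(0)|D=1])`. -/
theorem ipw_identifies_att
    {Ω 𝒳 : Type*} [MeasurableSpace Ω] [StandardBorelSpace Ω] [MeasurableSpace 𝒳]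
    (μ : Measure Ω) [IsProbabilityMeasure μ]
    (D : Ω → ℝ) (X : Ω → 𝒳) (Y0 Y1 : Ω → ℝ)
    (hD : Measurable D) (hX : Measurable X)
    (hY0 : Measurable Y0) (hY1 : Measurable Y1)
    (hDbin : ∀ ω, D ω = 0 ∨ D ω = 1)
    (hpos : 0 < μ {ω | D ω = 1})
    (hY0int : Integrable Y0 μ) (hY1int : Integrable Y1 μ)
    (π : Ω → ℝ) (hπ : π =ᵐ[μ] μ[D | MeasurableSpace.comap X inferInstance])
    (hoverlap : ∀ᵐ ω ∂μ, 0 < π ω ∧ π ω < 1)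
    (hunconf : CondIndepFun (MeasurableSpace.comap X inferInstance) hX.comap_le
      (fun ω => (Y0 ω, Y1 ω)) D μ)
    (hint : Integrable
      (fun ω => (D ω - (1 - D ω) * π ω / (1 - π ω))
        * (D ω * Y1 ω + (1 - D ω) * Y0 ω)) μ) :
    ∫ ω, (D ω - (1 - D ω) * π ω / (1 - π ω))
        * (D ω * Y1 ω + (1 - D ω) * Y0 ω) ∂μ
      = (μ {ω | D ω = 1}).toReal
        * (∫ ω, Y1 ω ∂μ[|{ω | D ω = 1}] - ∫ ω, Y0 ω ∂μ[|{ω | D ω = 1}]) := by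
  exact ipw_key hX.comap_le μ D Y0 Y1 hD hY0 hY1 hDbin hpos hY0int hY1int π hπ hoverlap
    (hunconf.comp (measurable_fst (β := ℝ)) measurable_id) hint
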